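/- For all positive integers d and a_1,…,a_d, the additive monoid of balanced ℕ-valued functions on Fin a_1 × ⋯ × Fin a_d is finitely generated; that is, the submonoid {w : Fin a_1 × ⋯ × Fin a_d → ℕ | w is balanced} of the monoid of all functions Fin a_1 × ⋯ × Fin a_d → ℕ under pointwise addition is finitely generated. -/

import Mathlib

/-- The additive submonoid of balanced `ℕ`-valued weight functions on
`Fin (a 0) × ⋯ × Fin (a (d-1))`: those `w` whose degree sums are constant on
every side. -/
def balancedSubmonoid (d : ℕ) (a : Fin d → ℕ) :
    AddSubmonoid ((∀ t, Fin (a t)) → ℕ) where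
  carrier := {w | ∀ t : Fin d, ∀ v u : Fin (a t),
    (∑ e : ∀ t, Fin (a t), if e t = v then w e else 0) =
      ∑ e : ∀ t, Fin (a t), if e t = u then w e else 0}
  zero_mem' := by intro t v u; simp
  add_mem' := by
    intro x y hx hy t v u
    have key : ∀ v : Fin (a t),
        (∑ e : ∀ t, Fin (a t), if e t = v then (x + y) e else 0) =
          (∑ e : ∀ t, Fin (a t), if e t = v then x e else 0) +
            ∑ e : ∀ t, Fin (a t), if e t = v then y e else 0 := by
      intro v
      rw [← Finset.sum_add_distrib]
      apply Finset.sum_congr rfl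
      intro e _
      by_cases h : e t = v <;> simp [h]
    rw [key v, key u, hx t v u, hy t v u]

/-- Any additive submonoid of `ι → ℕ` (with `ι` finite) that is closed under
pointwise (truncated) subtraction is finitely generated. -/
theorem fg_of_diff_closed {ι : Type*} [Fintype ι] (S : AddSubmonoid (ι → ℕ))
    (hdiff : ∀ x y, x ∈ S → y ∈ S → x ≤ y → y - x ∈ S) : S.FG := by
  classical
  set T : Set (ι → ℕ) := {x | x ∈ S ∧ x ≠ 0} with hT
  set M : Set (ι → ℕ) := {m ∈ T | ∀ z ∈ T, ¬ z < m} with hM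
  have hanti : IsAntichain (· ≤ ·) M := by
    intro m hm m' hm' hne hle
    exact hm'.2 m hm.1 (lt_of_le_of_ne hle hne)
  have hMfin : M.Finite :=
    hanti.finite_of_partiallyWellOrderedOn ((Set.IsPWO.pi (fun _ : ι => Set.IsPWO.of_linearOrder (Set.univ : Set ℕ))).mono (fun x _ => by simp))
  refine ⟨hMfin.toFinset, le_antisymm ?_ ?_⟩
  · rw [AddSubmonoid.closure_le]
    intro m hm
    simp only [Set.Finite.coe_toFinset] at hm
    exact hm.1.1
  · -- strong induction on the total sum
    intro x hx
    have key : ∀ n : ℕ, ∀ x : ι → ℕ, x ∈ S → (∑ i, x i) = n →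
        x ∈ AddSubmonoid.closure (hMfin.toFinset : Set (ι → ℕ)) := by
      intro n
      induction n using Nat.strong_induction_on with
      | _ n ih =>
        intro x hx hsum
        by_cases hx0 : x = 0
        · subst hx0; exact zero_mem _
        · have hxT : x ∈ T := ⟨hx, hx0⟩
          set U : Set (ι → ℕ) := {z ∈ T | z ≤ x} with hU
          have hUwf : U.IsWF := ((Set.IsPWO.pi (fun _ : ι => Set.IsPWO.of_linearOrder (Set.univ : Set ℕ))).mono (s := U) (fun x _ => by simp)).isWF
          have hUne : U.Nonempty := ⟨x, hxT, le_rfl⟩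
          set m := hUwf.min hUne with hm
          have hmU : m ∈ U := hUwf.min_mem hUne
          have hmM : m ∈ M := by
            refine ⟨hmU.1, fun z hz hlt => ?_⟩
            exact hUwf.not_lt_min hUne ⟨hz, hlt.le.trans hmU.2⟩ hlt
          have hmle : m ≤ x := hmU.2
          have hdm : x - m ∈ S := hdiff m x hmU.1.1 hx hmle
          have hxeq : x = m + (x - m) := by
            funext i
            simp [Nat.add_sub_cancel' (hmle i)]
          have hsumlt : (∑ i, (x - m) i) < n := by
            have hms : 0 < ∑ i, m i := by
              rcases Function.ne_iff.mp hmU.1.2 with ⟨i, hi⟩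
              exact Finset.sum_pos' (fun _ _ => Nat.zero_le _)
                ⟨i, Finset.mem_univ i, Nat.pos_of_ne_zero (by simpa using hi)⟩
            have : (∑ i, (x - m) i) + ∑ i, m i = ∑ i, x i := by
              rw [← Finset.sum_add_distrib]
              exact Finset.sum_congr rfl fun i _ => Nat.sub_add_cancel (hmle i)
            omega
          have h1 : m ∈ AddSubmonoid.closure (hMfin.toFinset : Set (ι → ℕ)) :=
            AddSubmonoid.subset_closure (by simpa using hmM)
          have h2 := ih _ hsumlt (x - m) hdm rfl
          rw [hxeq]
          exact add_mem h1 h2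
    exact key _ x hx rfl

/-- Gordan-type claim: the monoid of balanced `ℕ`-valued functions on
`Fin (a 0) × ⋯ × Fin (a (d-1))` (pointwise addition) is finitely generated. -/
theorem balancedSubmonoid_fg (d : ℕ) (hd : 0 < d) (a : Fin d → ℕ)
    (ha : ∀ t, 0 < a t) : (balancedSubmonoid d a).FG := by
  apply fg_of_diff_closed
  intro x y hx hy hle
  have hx' : ∀ t : Fin d, ∀ v u : Fin (a t),
      (∑ e : ∀ t, Fin (a t), if e t = v then x e else 0) =
        ∑ e : ∀ t, Fin (a t), if e t = u then x e else 0 := hx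
  have hy' : ∀ t : Fin d, ∀ v u : Fin (a t),
      (∑ e : ∀ t, Fin (a t), if e t = v then y e else 0) =
        ∑ e : ∀ t, Fin (a t), if e t = u then y e else 0 := hy
  show ∀ t : Fin d, ∀ v u : Fin (a t),
      (∑ e : ∀ t, Fin (a t), if e t = v then (y - x) e else 0) =
        ∑ e : ∀ t, Fin (a t), if e t = u then (y - x) e else 0
  intro t v u
  have key : ∀ w : Fin (a t),
      (∑ e : ∀ t, Fin (a t), if e t = w then (y - x) e else 0) +
        (∑ e : ∀ t, Fin (a t), if e t = w then x e else 0) =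
        ∑ e : ∀ t, Fin (a t), if e t = w then y e else 0 := by
    intro w
    rw [← Finset.sum_add_distrib]
    refine Finset.sum_congr rfl fun e _ => ?_
    by_cases h : e t = w <;> simp [h, Nat.sub_add_cancel (hle e)]
  have h1 := key v
  have h2 := key u
  rw [hx' t v u, hy' t v u] at h1
  exact Nat.add_right_cancel (h1.trans h2.symm)
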